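/- Define φ(x,y) = x·H(y/x) + H((1−x−y)/3) − 1 on the region D = {(x,y) ∈ ℝ² : 0 < x, 0 ≤ y ≤ x, x + y ≤ 1}, where H(p) = −p·log₂ p − (1−p)·log₂(1−p) is the binary entropy function (with H(0) = H(1) = 0). Then φ(x,y) ≤ 0 for all (x,y) ∈ D, with equality if and only if x = (√5 − 1)/4 and y = (√5 − 2)/2. -/

import Mathlib

/-- The binary entropy function `H(p) = −p·log₂ p − (1−p)·log₂(1−p)`
(with `H(0) = H(1) = 0`, which holds by the convention `log 0 = 0`). -/
noncomputable def binEnt (p : ℝ) : ℝ :=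
  -(p * Real.logb 2 p) - (1 - p) * Real.logb 2 (1 - p)

/-- `φ(x,y) = x·H(y/x) + H((1−x−y)/3) − 1`. -/
noncomputable def phi (x y : ℝ) : ℝ :=
  x * binEnt (y / x) + binEnt ((1 - x - y) / 3) - 1

lemma klog (a b : ℝ) (ha : 0 ≤ a) (hb : 0 < b) :
    a - b ≤ a * Real.log a - a * Real.log b ∧
      (a - b = a * Real.log a - a * Real.log b ↔ a = b) := by
  rcases ha.eq_or_lt with h | h
  · subst h
    simp only [zero_mul, sub_zero, zero_sub]
    refine ⟨by linarith, ⟨fun h => by linarith, fun h => absurd h.symm hb.ne'⟩⟩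
  · have hba : 0 < b / a := div_pos hb h
    have h1 : Real.log (b / a) ≤ b / a - 1 := Real.log_le_sub_one_of_pos hba
    have hlog : Real.log (b / a) = Real.log b - Real.log a := Real.log_div hb.ne' h.ne'
    have hba' : a * (b / a) = b := by field_simp
    constructor
    · have := mul_le_mul_of_nonneg_left h1 h.le
      rw [hlog] at this
      nlinarith
    · constructor
      · intro heq
        by_contra hne
        have hne' : b / a ≠ 1 := by
          intro hc; apply hne; field_simp at hc; linarith
        have h2 : Real.log (b / a) < b / a - 1 := Real.log_lt_sub_one_of_pos hba hne'
        rw [hlog] at h2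
        have := mul_lt_mul_of_pos_left h2 h
        nlinarith
      · intro h; subst h; ring

lemma gibbs (p t : ℝ) (hp0 : 0 ≤ p) (hp1 : p ≤ 1) (ht0 : 0 < t) (ht1 : t < 1) :
    binEnt p ≤ -(p * Real.logb 2 t) - (1 - p) * Real.logb 2 (1 - t) ∧
      (binEnt p = -(p * Real.logb 2 t) - (1 - p) * Real.logb 2 (1 - t) ↔ p = t) := by
  have h2 : (0:ℝ) < Real.log 2 := Real.log_pos (by norm_num)
  have k1 := klog p t hp0 ht0
  have k2 := klog (1 - p) (1 - t) (by linarith) (by linarith)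
  set D := (p * Real.log p - p * Real.log t)
      + ((1 - p) * Real.log (1 - p) - (1 - p) * Real.log (1 - t)) with hD
  have hDnn : 0 ≤ D := by have := k1.1; have := k2.1; simp only [hD]; linarith
  have key : (-(p * Real.logb 2 t) - (1 - p) * Real.logb 2 (1 - t)) - binEnt p
      = D / Real.log 2 := by
    simp only [binEnt, Real.logb, hD]; ring
  constructor
  · have : 0 ≤ D / Real.log 2 := div_nonneg hDnn h2.le
    linarith
  · constructor
    · intro heq
      have hD0 : D = 0 := by
        have : D / Real.log 2 = 0 := by linarith
        field_simp at this; exact this.trans (mul_zero _)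
      have h1' : p - t = p * Real.log p - p * Real.log t := by
        have := k1.1; have := k2.1; simp only [hD] at hD0; linarith
      exact k1.2.mp h1'
    · intro h
      subst h
      have hD0 : D = 0 := by simp only [hD]; ring
      rw [hD0, zero_div] at key
      linarith

section logids

lemma sqrt5_sq : Real.sqrt 5 ^ 2 = 5 := Real.sq_sqrt (by norm_num)

lemma sqrt5_gt : 2 < Real.sqrt 5 := by
  nlinarith [sqrt5_sq, Real.sqrt_nonneg 5]

lemma sqrt5_lt : Real.sqrt 5 < 3 := by
  nlinarith [sqrt5_sq, Real.sqrt_nonneg 5]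

noncomputable def Lc : ℝ := Real.logb 2 ((1 + Real.sqrt 5) / 2)

lemma log_t : Real.logb 2 ((3 - Real.sqrt 5) / 2) = -(2 * Lc) := by
  have h : ((1 + Real.sqrt 5) / 2) ^ 2 * ((3 - Real.sqrt 5) / 2) = 1 := by
    nlinarith [sqrt5_sq]
  have e : (3 - Real.sqrt 5) / 2 = (((1 + Real.sqrt 5) / 2) ^ 2)⁻¹ :=
    eq_inv_of_mul_eq_one_left (by linarith [h, mul_comm (((1 + Real.sqrt 5) / 2) ^ 2) ((3 - Real.sqrt 5) / 2)])
  rw [e, Real.logb_inv, Real.logb_pow]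
  simp [Lc]

lemma log_1t : Real.logb 2 ((Real.sqrt 5 - 1) / 2) = -Lc := by
  have h : ((1 + Real.sqrt 5) / 2) * ((Real.sqrt 5 - 1) / 2) = 1 := by
    nlinarith [sqrt5_sq]
  have e : (Real.sqrt 5 - 1) / 2 = ((1 + Real.sqrt 5) / 2)⁻¹ :=
    eq_inv_of_mul_eq_one_left (by linarith [h, mul_comm ((1 + Real.sqrt 5) / 2) ((Real.sqrt 5 - 1) / 2)])
  rw [e, Real.logb_inv]
  simp [Lc]

lemma log_s : Real.logb 2 ((3 - Real.sqrt 5) / 4) = -(2 * Lc) - 1 := by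
  have e : (3 - Real.sqrt 5) / 4 = ((3 - Real.sqrt 5) / 2) / 2 := by ring
  rw [e, Real.logb_div (by nlinarith [sqrt5_lt]) (by norm_num), log_t,
    Real.logb_self_eq_one (by norm_num)]

lemma log_1s : Real.logb 2 ((1 + Real.sqrt 5) / 4) = Lc - 1 := by
  have e : (1 + Real.sqrt 5) / 4 = ((1 + Real.sqrt 5) / 2) / 2 := by ring
  rw [e, Real.logb_div (by nlinarith [sqrt5_gt]) (by norm_num),
    Real.logb_self_eq_one (by norm_num)]
  rfl

end logids

/-- On the region `0 < x`, `0 ≤ y ≤ x`, `x + y ≤ 1`, the function `φ` is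
nonpositive, with equality exactly at `x = (√5−1)/4`, `y = (√5−2)/2`. -/
theorem phi_nonpos (x y : ℝ) (hx : 0 < x) (hy : 0 ≤ y) (hyx : y ≤ x)
    (hxy : x + y ≤ 1) :
    phi x y ≤ 0 ∧
      (phi x y = 0 ↔ x = (Real.sqrt 5 - 1) / 4 ∧ y = (Real.sqrt 5 - 2) / 2) := by
  set s5 := Real.sqrt 5 with hs5def
  have hs5 : s5 ^ 2 = 5 := sqrt5_sq
  have h2s5 : 2 < s5 := sqrt5_gt
  have hs53 : s5 < 3 := sqrt5_lt
  set p := y / x with hpdef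
  set q := (1 - x - y) / 3 with hqdef
  have hp0 : 0 ≤ p := div_nonneg hy hx.le
  have hp1 : p ≤ 1 := (div_le_one hx).mpr hyx
  have hq0 : 0 ≤ q := by simp only [hqdef]; linarith
  have hq1 : q ≤ 1 := by simp only [hqdef]; linarith
  have g1 := gibbs p ((3 - s5) / 2) hp0 hp1 (by linarith) (by linarith)
  have g2 := gibbs q ((3 - s5) / 4) hq0 hq1 (by linarith) (by linarith)
  have e1 : (1:ℝ) - (3 - s5) / 2 = (s5 - 1) / 2 := by ring
  have e2 : (1:ℝ) - (3 - s5) / 4 = (1 + s5) / 4 := by ring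
  rw [e1] at g1
  rw [e2] at g2
  have hB : x * (-(p * Real.logb 2 ((3 - s5) / 2)) - (1 - p) * Real.logb 2 ((s5 - 1) / 2))
      + (-(q * Real.logb 2 ((3 - s5) / 4)) - (1 - q) * Real.logb 2 ((1 + s5) / 4)) - 1 = 0 := by
    rw [log_t, log_1t, log_s, log_1s]
    simp only [hpdef, hqdef]
    field_simp
    ring
  have ineq1 : x * binEnt p ≤
      x * (-(p * Real.logb 2 ((3 - s5) / 2)) - (1 - p) * Real.logb 2 ((s5 - 1) / 2)) :=
    mul_le_mul_of_nonneg_left g1.1 hx.le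
  have hphi : phi x y = x * binEnt p + binEnt q - 1 := rfl
  constructor
  · rw [hphi]; linarith [g2.1]
  · constructor
    · intro h
      rw [hphi] at h
      have hA : x * binEnt p =
          x * (-(p * Real.logb 2 ((3 - s5) / 2)) - (1 - p) * Real.logb 2 ((s5 - 1) / 2)) := by
        linarith [g2.1]
      have hBq : binEnt q =
          -(q * Real.logb 2 ((3 - s5) / 4)) - (1 - q) * Real.logb 2 ((1 + s5) / 4) := by
        linarith
      have hpt : p = (3 - s5) / 2 := g1.2.mp (mul_left_cancel₀ hx.ne' hA)
      have hqs : q = (3 - s5) / 4 := g2.2.mp hBq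
      have hy1 : y = (3 - s5) / 2 * x := by
        rw [hpdef] at hpt
        field_simp at hpt
        linarith
      have hq1' : 1 - x - y = 3 * ((3 - s5) / 4) := by
        rw [hqdef] at hqs
        field_simp at hqs
        linarith
      have key : x * ((5 - s5) / 2) = (3 * s5 - 5) / 4 := by
        linear_combination -hq1' - hy1
      have hxv : x = (s5 - 1) / 4 := by
        have h5 : (5 - s5) / 2 ≠ 0 := by intro h; nlinarith
        have : x * ((5 - s5) / 2) = (s5 - 1) / 4 * ((5 - s5) / 2) := by
          rw [key]; linear_combination ((1:ℝ)/8) * hs5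
        exact mul_right_cancel₀ h5 this
      refine ⟨hxv, ?_⟩
      rw [hxv] at hy1
      rw [hy1]; linear_combination (-(1:ℝ)/8) * hs5
    · rintro ⟨hxv, hyv⟩
      have hpt : p = (3 - s5) / 2 := by
        rw [hpdef, hxv, hyv, div_eq_iff (by intro h; nlinarith : ((s5:ℝ) - 1) / 4 ≠ 0)]
        linear_combination ((1:ℝ)/8) * hs5
      have hqs : q = (3 - s5) / 4 := by
        rw [hqdef, hxv, hyv]; ring
      have hA := g1.2.mpr hpt
      have hBq := g2.2.mpr hqs
      rw [hphi, hA, hBq]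
      linarith
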